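/- Let f_{i,j}(X) = f(X) be the same nonconstant polynomial for all 1 ≤ i ≤ m, 1 ≤ j ≤ n with n ≥ m ≥ r ≥ 1, and suppose there exist x_{i,j} ∈ [−H,H] ∩ ℤ (1 ≤ i,j ≤ r) such that the r×r matrix (f(x_{i,j})) is nonsingular. Then the number of m×n matrices (f(x_{i,j})) with all x_{i,j} ∈ [−H,H] ∩ ℤ of rank exactly r is ≫ H^{nr} (i.e., at least c·H^{nr} for some constant c > 0 depending on f, m, n, r). -/

import Mathlib

open MvPolynomial Finset

lemma count_eval_ne_zero (d : ℕ) : ∀ (k : ℕ) (P : MvPolynomial (Fin k) ℤ), P ≠ 0 →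
    (∀ i, P.degreeOf i ≤ d) → ∀ H : ℕ,
    (2 * H + 1 - d) ^ k ≤ ((Fintype.piFinset fun _ : Fin k => Finset.Icc (-(H : ℤ)) (H : ℤ)).filter
      fun w => MvPolynomial.eval w P ≠ 0).card := by
  intro k
  induction k with
  | zero =>
    intro P hP _ H
    obtain ⟨a, ha⟩ : ∃ a, eval a P ≠ 0 := by
      by_contra h
      push_neg at h
      exact hP (MvPolynomial.funext fun x => by simp [h x])
    rw [pow_zero]
    exact Finset.card_pos.2
      ⟨a, Finset.mem_filter.2 ⟨Fintype.mem_piFinset.2 fun i => i.elim0, ha⟩⟩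
  | succ k ih =>
    intro P hP hdeg H
    set Q : Polynomial (MvPolynomial (Fin k) ℤ) := finSuccEquiv ℤ k P with hQdef
    have hQ0 : Q ≠ 0 := by
      simpa [hQdef] using hP
    have hQdeg : Q.natDegree ≤ d := by
      rw [hQdef, natDegree_finSuccEquiv]; exact hdeg 0
    set B := (Finset.Icc (-(H:ℤ)) (H:ℤ)).filter (fun t => Polynomial.eval (C t) Q = 0) with hBdef
    set S := (Finset.Icc (-(H:ℤ)) (H:ℤ)).filter (fun t => ¬ Polynomial.eval (C t) Q = 0) with hSdef
    have hBcard : B.card ≤ d := by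
      have h1 : B.card ≤ Q.roots.toFinset.card := by
        apply Finset.card_le_card_of_injOn (fun t => (C t : MvPolynomial (Fin k) ℤ))
        · intro t ht
          rw [Finset.mem_coe, Multiset.mem_toFinset, Polynomial.mem_roots hQ0]
          exact (Finset.mem_filter.1 ht).2
        · intro t _ s _ h
          exact C_injective _ _ h
      exact h1.trans ((Q.roots.toFinset_card_le).trans ((Polynomial.card_roots' Q).trans hQdeg))
    have hScard : 2 * H + 1 - d ≤ S.card := by
      have h2 : B.card + S.card = (Finset.Icc (-(H:ℤ)) (H:ℤ)).card :=
        Finset.card_filter_add_card_filter_not _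
      have h3 : (Finset.Icc (-(H:ℤ)) (H:ℤ)).card = 2 * H + 1 := by
        rw [Int.card_Icc, show ((H:ℤ) + 1 - -(H:ℤ)) = ((2*H+1 : ℕ) : ℤ) by push_cast; ring,
          Int.toNat_natCast]
      omega
    have key : ∀ t ∈ S, (2*H+1-d)^k ≤
        ((Fintype.piFinset fun _ : Fin k => Finset.Icc (-(H:ℤ)) (H:ℤ)).filter
          fun y => MvPolynomial.eval y (Polynomial.eval (C t) Q) ≠ 0).card := by
      intro t ht
      refine ih _ (Finset.mem_filter.1 ht).2 (fun i => ?_) H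
      rw [Polynomial.eval_eq_sum_range]
      refine le_trans (degreeOf_sum_le _ _ _) (Finset.sup_le fun mm _ => ?_)
      refine le_trans (degreeOf_mul_le _ _ _) ?_
      rw [← map_pow, degreeOf_C, add_zero]
      exact (degreeOf_coeff_finSuccEquiv P i mm).trans (hdeg i.succ)
    set T := S.sigma (fun t => (Fintype.piFinset fun _ : Fin k => Finset.Icc (-(H:ℤ)) (H:ℤ)).filter
        fun y => MvPolynomial.eval y (Polynomial.eval (C t) Q) ≠ 0) with hTdef
    have hTcard : S.card * (2*H+1-d)^k ≤ T.card := by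
      rw [hTdef, Finset.card_sigma]
      calc S.card * (2*H+1-d)^k = ∑ _t ∈ S, (2*H+1-d)^k := by
            rw [Finset.sum_const, smul_eq_mul]
        _ ≤ _ := Finset.sum_le_sum key
    have hcard : T.card ≤ ((Fintype.piFinset fun _ : Fin (k+1) => Finset.Icc (-(H:ℤ)) (H:ℤ)).filter
        fun w => MvPolynomial.eval w P ≠ 0).card := by
      apply Finset.card_le_card_of_injOn (fun p => Fin.cons p.1 p.2)
      · intro p hp
        obtain ⟨hp1, hp2⟩ := Finset.mem_sigma.1 hp
        obtain ⟨hp2a, hp2b⟩ := Finset.mem_filter.1 hp2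
        refine Finset.mem_filter.2 ⟨Fintype.mem_piFinset.2 fun i => ?_, ?_⟩
        · refine Fin.cases ?_ ?_ i
          · simpa using (Finset.mem_filter.1 hp1).1
          · intro j; simpa using Fintype.mem_piFinset.1 hp2a j
        · have hcomm : Polynomial.eval p.1 (Polynomial.map (MvPolynomial.eval p.2) Q)
              = MvPolynomial.eval p.2 (Polynomial.eval (C p.1) Q) := by
            rw [Polynomial.eval_map,
              show Polynomial.eval (C p.1) Q = Polynomial.eval₂ (RingHom.id _) (C p.1) Q from rfl,
              Polynomial.hom_eval₂]
            simp
          rw [eval_eq_eval_mv_eval', ← hQdef, hcomm]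
          exact hp2b
      · intro p _ q _ h
        obtain ⟨h1, h2⟩ := Fin.cons_inj.1 h
        exact Sigma.ext h1 (heq_of_eq h2)
    calc (2*H+1-d)^(k+1) = (2*H+1-d) * (2*H+1-d)^k := by ring
      _ ≤ S.card * (2*H+1-d)^k := Nat.mul_le_mul_right _ hScard
      _ ≤ T.card := hTcard
      _ ≤ _ := hcard

/-- Let `f ∈ ℤ[X]` be nonconstant and `n ≥ m ≥ r ≥ 1`. If for a given `H` there
exist `x i j ∈ [−H,H]` making the `r×r` matrix `(f (x i j))` nonsingular, then
the number of `m×n` matrices `(f (x i j))` with all `x i j ∈ [−H,H]` of rank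
exactly `r` is `≫ H^{nr}`, with an implied constant depending only on
`f, m, n, r`. -/
theorem stmt16 (m n r : ℕ) (hr : 1 ≤ r) (hrm : r ≤ m) (hmn : m ≤ n)
    (f : Polynomial ℤ) (hf : 0 < f.natDegree) :
    ∃ c : ℝ, 0 < c ∧ ∀ H : ℕ, 1 ≤ H →
      (∃ x : Fin r → Fin r → ℤ, (∀ i j, |x i j| ≤ (H : ℤ)) ∧
        (Matrix.of fun i j => ((f.eval (x i j) : ℤ) : ℚ)).det ≠ 0) →
      c * (H : ℝ) ^ (n * r) ≤
        (Set.ncard {x : Fin m → Fin n → ℤ | (∀ i j, |x i j| ≤ (H : ℤ)) ∧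
          (Matrix.of fun i j => ((f.eval (x i j) : ℤ) : ℚ)).rank = r} : ℝ) := by
  classical
  have hrn : r ≤ n := hrm.trans hmn
  set d := r * f.natDegree with hd
  have hd1 : 0 < d := Nat.mul_pos hr hf
  refine ⟨((d : ℝ) + 1)⁻¹ ^ (n * r), by positivity, ?_⟩
  rintro H hH ⟨x, hxb, hxdet⟩
  set S : Set (Fin m → Fin n → ℤ) := {x : Fin m → Fin n → ℤ | (∀ i j, |x i j| ≤ (H : ℤ)) ∧
          (Matrix.of fun i j => ((f.eval (x i j) : ℤ) : ℚ)).rank = r} with hS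
  set e : Fin r × Fin n ≃ Fin (r * n) := finProdFinEquiv with he
  set ρ : Fin m → Fin r := fun i => if h : (i : ℕ) < r then ⟨i, h⟩ else ⟨0, hr⟩ with hρdef
  have hρ : ∀ i : Fin r, ρ (Fin.castLE hrm i) = i := by
    intro i
    simp only [hρdef, Fin.coe_castLE, i.isLt, dif_pos, Fin.eta]
  set P : MvPolynomial (Fin (r * n)) ℤ :=
    (Matrix.of fun i j : Fin r =>
      Polynomial.eval₂ (MvPolynomial.C) (MvPolynomial.X (e (i, Fin.castLE hrn j))) f).det with hP
  have hevalentry : ∀ (w : Fin (r*n) → ℤ) (idx : Fin (r*n)),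
      MvPolynomial.eval w (Polynomial.eval₂ MvPolynomial.C (MvPolynomial.X idx) f)
        = f.eval (w idx) := by
    intro w idx
    rw [Polynomial.hom_eval₂]
    have h1 : (MvPolynomial.eval w).comp (MvPolynomial.C) = RingHom.id ℤ :=
      RingHom.ext fun a => MvPolynomial.eval_C _
    rw [h1, MvPolynomial.eval_X]
    rfl
  have hevalP : ∀ w : Fin (r*n) → ℤ, MvPolynomial.eval w P
      = (Matrix.of fun i j : Fin r => f.eval (w (e (i, Fin.castLE hrn j)))).det := by
    intro w
    rw [hP, RingHom.map_det]
    congr 1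
    ext i j
    exact hevalentry w _
  have hdetcast : ∀ M : Matrix (Fin r) (Fin r) ℤ,
      ((M.det : ℤ) : ℚ) = (M.map (Int.cast : ℤ → ℚ)).det := by
    intro M
    have h := RingHom.map_det (Int.castRingHom ℚ) M
    simpa [RingHom.mapMatrix_apply] using h
  have hPdeg : ∀ idx, P.degreeOf idx ≤ d := by
    intro idx
    refine (MvPolynomial.degreeOf_le_totalDegree _ _).trans ?_
    rw [hP, Matrix.det_apply]
    refine (MvPolynomial.totalDegree_finset_sum _ _).trans (Finset.sup_le fun σ _ => ?_)
    refine (MvPolynomial.totalDegree_smul_le _ _).trans ?_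
    refine (MvPolynomial.totalDegree_finset_prod _ _).trans ?_
    have hone : ∀ (i j : Fin r), (Polynomial.eval₂ (MvPolynomial.C)
        (MvPolynomial.X (e (i, Fin.castLE hrn j)) : MvPolynomial (Fin (r*n)) ℤ) f).totalDegree
        ≤ f.natDegree := by
      intro i j
      rw [Polynomial.eval₂_eq_sum_range]
      refine (MvPolynomial.totalDegree_finset_sum _ _).trans (Finset.sup_le fun k hk => ?_)
      refine (MvPolynomial.totalDegree_mul _ _).trans ?_
      have h2 := MvPolynomial.totalDegree_pow
        (MvPolynomial.X (e (i, Fin.castLE hrn j)) : MvPolynomial (Fin (r*n)) ℤ) k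
      rw [MvPolynomial.totalDegree_C, MvPolynomial.totalDegree_X] at *
      have : k ≤ f.natDegree := by
        have := Finset.mem_range.1 hk; omega
      omega
    calc ∑ i, ((Matrix.of fun i j : Fin r =>
            Polynomial.eval₂ (MvPolynomial.C)
              (MvPolynomial.X (e (i, Fin.castLE hrn j))) f) (σ i) i).totalDegree
        ≤ ∑ _i : Fin r, f.natDegree := Finset.sum_le_sum (fun i _ => hone _ _)
      _ = d := by simp [hd, Finset.sum_const, mul_comm]
  -- witness
  set w₀ : Fin (r*n) → ℤ := fun idx =>
    if h : ((e.symm idx).2 : ℕ) < r then x (e.symm idx).1 ⟨(e.symm idx).2, h⟩ else 0 with hw₀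
  have hw₀b : ∀ idx, |w₀ idx| ≤ (H : ℤ) := by
    intro idx
    rw [hw₀]
    dsimp only
    split
    · exact hxb _ _
    · simp only [abs_zero]
      exact_mod_cast Nat.zero_le H
  have hw₀e : ∀ (i : Fin r) (j : Fin r), w₀ (e (i, Fin.castLE hrn j)) = x i j := by
    intro i j
    rw [hw₀]
    dsimp only
    rw [Equiv.symm_apply_apply]
    have hj : ((Fin.castLE hrn j : Fin n) : ℕ) < r := j.isLt
    rw [dif_pos hj]
    rfl
  have hPw₀ : MvPolynomial.eval w₀ P ≠ 0 := by
    rw [hevalP]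
    intro h0
    apply hxdet
    have hcast : (Matrix.of fun i j : Fin r => ((f.eval (x i j) : ℤ) : ℚ))
        = (Matrix.of fun i j : Fin r => f.eval (w₀ (e (i, Fin.castLE hrn j)))).map
            (Int.cast : ℤ → ℚ) := by
      ext i j
      simp [hw₀e i j]
    rw [hcast, ← hdetcast]
    rw [h0]
    simp
  have hP0 : P ≠ 0 := fun h => hPw₀ (by rw [h]; simp)
  have hcount := count_eval_ne_zero d (r*n) P hP0 hPdeg H
  set box := Fintype.piFinset fun _ : Fin (r*n) => Finset.Icc (-(H:ℤ)) (H:ℤ) with hbox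
  set good := box.filter (fun w => MvPolynomial.eval w P ≠ 0) with hgood
  set Φ : (Fin (r*n) → ℤ) → (Fin m → Fin n → ℤ) := fun w i j => w (e (ρ i, j)) with hΦ
  have hΦinj : Set.InjOn Φ ↑good := by
    intro w _ w' _ h
    funext idx
    have h1 : idx = e (e.symm idx) := (Equiv.apply_symm_apply _ _).symm
    rw [h1]
    have h2 := congrFun (congrFun h (Fin.castLE hrm (e.symm idx).1)) (e.symm idx).2
    simpa only [hΦ, hρ, Prod.mk.eta] using h2
  have hmem : ∀ w ∈ good, Φ w ∈ S := by
    intro w hwg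
    obtain ⟨hwbox, hwP⟩ := Finset.mem_filter.1 hwg
    have hwb : ∀ idx, |w idx| ≤ (H:ℤ) := fun idx =>
      abs_le.2 (Finset.mem_Icc.1 (Fintype.mem_piFinset.1 hwbox idx))
    refine ⟨fun i j => hwb _, ?_⟩
    set A : Matrix (Fin m) (Fin n) ℚ := Matrix.of fun i j => ((f.eval (Φ w i j) : ℤ) : ℚ) with hA
    set C0 : Matrix (Fin r) (Fin n) ℚ :=
      Matrix.of fun i j => ((f.eval (w (e (i, j))) : ℤ) : ℚ) with hC0
    have hAentry : ∀ i j, A i j = C0 (ρ i) j := fun i j => rfl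
    have hup : A.rank ≤ r := by
      have hBC : A = (Matrix.of fun (i : Fin m) (k : Fin r) =>
          if k = ρ i then (1:ℚ) else 0) * C0 := by
        ext i j
        rw [Matrix.mul_apply]
        simp only [Matrix.of_apply, ite_mul, one_mul, zero_mul]
        rw [Finset.sum_ite_eq']
        simp [hAentry]
      rw [hBC]
      exact (Matrix.rank_mul_le_right _ _).trans (by simpa using C0.rank_le_card_height)
    have hlow : r ≤ A.rank := by
      set M : Matrix (Fin r) (Fin r) ℚ :=
        Matrix.of fun i j => ((f.eval (w (e (i, Fin.castLE hrn j))) : ℤ) : ℚ) with hM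
      have hMdet : M.det ≠ 0 := by
        intro h0
        apply hwP
        have hcast : ((MvPolynomial.eval w P : ℤ) : ℚ) = M.det := by
          rw [hevalP w, hdetcast]
          rfl
        rw [h0] at hcast
        exact_mod_cast hcast
      have hMrank : M.rank = r := by
        have hu : IsUnit M := (Matrix.isUnit_iff_isUnit_det M).2 (isUnit_iff_ne_zero.2 hMdet)
        simpa using Matrix.rank_of_isUnit M hu
      have hMfact : M = (Matrix.of fun (i : Fin r) (k : Fin m) =>
            if k = Fin.castLE hrm i then (1:ℚ) else 0) *
          (A * (Matrix.of fun (k : Fin n) (j : Fin r) =>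
            if k = Fin.castLE hrn j then (1:ℚ) else 0)) := by
        ext i j
        simp only [Matrix.mul_apply, Matrix.of_apply, ite_mul, mul_ite, one_mul, mul_one,
          zero_mul, mul_zero, Finset.sum_ite_eq', Finset.mem_univ, if_true]
        have : A (Fin.castLE hrm i) (Fin.castLE hrn j) = M i j := by
          rw [hAentry, hρ]
          rfl
        rw [this]
      rw [← hMrank, hMfact]
      exact (Matrix.rank_mul_le_right _ _).trans (Matrix.rank_mul_le_left _ _)
    exact le_antisymm hup hlow
  have hSfin : S.Finite := by
    apply Set.Finite.subset (Finset.finite_toSet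
      (Fintype.piFinset fun _ : Fin m => Fintype.piFinset fun _ : Fin n =>
        Finset.Icc (-(H:ℤ)) (H:ℤ)))
    intro y hy
    simp only [Finset.coe_sort_coe, Finset.mem_coe, Fintype.mem_piFinset, Finset.mem_Icc]
    intro i j
    have := hy.1 i j
    exact abs_le.1 this
  have h1 : good.card ≤ S.ncard := by
    have himg : (good.image Φ).card = good.card := Finset.card_image_of_injOn hΦinj
    rw [← himg, ← Set.ncard_coe_finset (good.image Φ)]
    apply Set.ncard_le_ncard _ hSfin
    intro y hy
    simp only [Finset.coe_image, Set.mem_image, Finset.mem_coe] at hy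
    obtain ⟨w, hw, rfl⟩ := hy
    exact hmem w hw
  have hw₀good : w₀ ∈ good := by
    refine Finset.mem_filter.2 ⟨Fintype.mem_piFinset.2 fun idx => ?_, hPw₀⟩
    exact Finset.mem_Icc.2 (abs_le.1 (hw₀b idx))
  by_cases hdH : d ≤ H
  · have h2 : H ^ (n*r) ≤ (2*H+1-d)^(r*n) := by
      rw [mul_comm n r]
      exact Nat.pow_le_pow_left (by omega) _
    have h3 : H^(n*r) ≤ S.ncard := le_trans (h2.trans hcount) h1
    have hc1 : ((d : ℝ) + 1)⁻¹ ^ (n * r) ≤ 1 := by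
      apply pow_le_one₀ (by positivity)
      rw [inv_le_one₀ (by positivity)]
      exact le_add_of_nonneg_left (by positivity)
    calc ((d : ℝ) + 1)⁻¹ ^ (n * r) * (H:ℝ)^(n*r) ≤ 1 * (H:ℝ)^(n*r) :=
          mul_le_mul_of_nonneg_right hc1 (by positivity)
      _ = (H:ℝ)^(n*r) := one_mul _
      _ ≤ (S.ncard : ℝ) := by exact_mod_cast h3
  · have h4 : 0 < S.ncard := (Set.ncard_pos hSfin).2 ⟨Φ w₀, hmem w₀ hw₀good⟩
    calc ((d : ℝ) + 1)⁻¹ ^ (n * r) * (H:ℝ)^(n*r) = (((d:ℝ)+1)⁻¹ * H)^(n*r) := by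
          rw [mul_pow]
      _ ≤ 1 := by
          apply pow_le_one₀ (by positivity)
          have hHd : (H:ℝ) ≤ (d:ℝ)+1 := by
            have : H ≤ d + 1 := by omega
            exact_mod_cast this
          calc ((d:ℝ)+1)⁻¹ * H ≤ ((d:ℝ)+1)⁻¹ * ((d:ℝ)+1) :=
                mul_le_mul_of_nonneg_left hHd (by positivity)
            _ = 1 := inv_mul_cancel₀ (by positivity)
      _ ≤ (S.ncard : ℝ) := by exact_mod_cast h4
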